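/- Let u₁, u₂, v₁, v₂ ∈ Σ* with v₁, v₂ nonempty, and suppose there is a mismatch between u₁ and u₂ (i.e., there is a position i with i < |u₁|, i < |u₂|, and u₁[i] ≠ u₂[i]). Then for every n ∈ ℕ, |Δ(u₁v₁ⁿ, u₂v₂ⁿ)| = |u₁| + |u₂| + n(|v₁| + |v₂|) - 2p, where p < min(|u₁|,|u₂|) is the length of the longest common prefix of u₁ and u₂; in particular |Δ(u₁v₁ⁿ, u₂v₂ⁿ)| ≥ n(|v₁|+|v₂|) ≥ n·2 > n for n ≥ 1. -/

import Mathlib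

variable {S G : Type}

def wordFG (w : List G) : FreeGroup G := (w.map FreeGroup.of).prod

def delta (v w : List G) : FreeGroup G := (wordFG v)⁻¹ * wordFG w

def dlen [DecidableEq G] (v w : List G) : ℕ := (delta v w).norm

def wpow (v : List G) (n : ℕ) : List G := (List.replicate n v).flatten

structure NFT (S G Q : Type) where
  E : Set (Q × S × List G × Q)
  I : Set Q
  F : Set Q
  out : Q → List G

namespace NFT

variable {Q Q₁ Q₂ : Type}

inductive Run (T : NFT S G Q) : Q → List S → List G → Q → Prop
  | nil (q : Q) : Run T q [] [] q
  | cons {q q' q'' : Q} {a : S} {w : List G} {u : List S} {v : List G} :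
      (q, a, w, q') ∈ T.E → Run T q' u v q'' → Run T q (a :: u) (w ++ v) q''

def Rel (T : NFT S G Q) (u : List S) (v : List G) : Prop :=
  ∃ i t w, i ∈ T.I ∧ t ∈ T.F ∧ T.Run i u w t ∧ v = w ++ T.out t

def Trim (T : NFT S G Q) : Prop :=
  ∀ q : Q, ∃ i t u₁ w₁ u₂ w₂, i ∈ T.I ∧ t ∈ T.F ∧ T.Run i u₁ w₁ q ∧ T.Run q u₂ w₂ t

def WTP (T : NFT S G Q) : Prop :=
  ∀ q₁ q₂ (u v : List S) (u₁ u₂ v₁ v₂ : List G), T.Run q₁ u u₁ q₁ → T.Run q₁ v v₁ q₁ →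
    T.Run q₁ u u₂ q₂ → T.Run q₂ v v₂ q₂ →
    delta u₁ u₂ = delta (u₁ ++ v₁) (u₂ ++ v₂)

def Seq (T : NFT S G Q) : Prop :=
  (∃ q₀, T.I = {q₀}) ∧
  ∀ q a w₁ q₁ w₂ q₂, (q, a, w₁, q₁) ∈ T.E → (q, a, w₂, q₂) ∈ T.E → w₁ = w₂ ∧ q₁ = q₂

end NFT


section Aux

variable {G : Type}

theorem reduce_eq_self_of_chain [DecidableEq G] (L : List (G × Bool))
    (h : List.Chain' (fun x y => ¬(x.1 = y.1 ∧ x.2 = !y.2)) L) : FreeGroup.reduce L = L := by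
  induction L with
  | nil => rfl
  | cons x l ih =>
    unfold List.Chain' at h
    rw [List.isChain_cons] at h
    rw [FreeGroup.reduce.cons, ih h.2]
    cases l with
    | nil => rfl
    | cons y t => simp only [if_neg (h.1 y rfl)]

theorem wordFG_eq_mk (w : List G) : wordFG w = FreeGroup.mk (w.map (fun x => (x, true))) := by
  induction w with
  | nil => rfl
  | cons x l ih =>
    show FreeGroup.of x * wordFG l = _
    rw [ih, FreeGroup.of, FreeGroup.mul_mk]
    rfl

theorem wordFG_append (x y : List G) : wordFG (x ++ y) = wordFG x * wordFG y := by
  simp [wordFG]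

theorem chain_const_snd [DecidableEq G] (l : List G) (c : Bool) :
    List.Chain' (fun x y : G × Bool => ¬(x.1 = y.1 ∧ x.2 = !y.2)) (l.map (fun x => (x, c))) := by
  induction l with
  | nil => simp [List.Chain']
  | cons x l ih =>
    cases l with
    | nil => simp [List.Chain']
    | cons y t =>
      refine List.isChain_cons_cons.mpr ⟨?_, ih⟩
      simp

theorem dlen_eq_of_head_ne [DecidableEq G] (a b : List G) (ha : a ≠ []) (hb : b ≠ [])
    (hne : a.head ha ≠ b.head hb) :
    dlen a b = a.length + b.length := by
  rw [dlen, delta, wordFG_eq_mk, wordFG_eq_mk, FreeGroup.inv_mk, FreeGroup.mul_mk]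
  have hinv : FreeGroup.invRev (a.map (fun x => (x, true))) =
      a.reverse.map (fun x => (x, false)) := by
    simp [FreeGroup.invRev, List.map_reverse]
  rw [hinv]
  have hch : List.Chain' (fun x y : G × Bool => ¬(x.1 = y.1 ∧ x.2 = !y.2))
      (a.reverse.map (fun x => (x, false)) ++ b.map (fun x => (x, true))) := by
    unfold List.Chain'
    rw [List.isChain_append]
    refine ⟨chain_const_snd _ _, chain_const_snd _ _, ?_⟩
    intro x hx y hy
    rw [List.getLast?_eq_getLast (by simp [ha]), List.getLast_map] at hx
    rw [List.head?_eq_head (by simp [hb]), List.head_map] at hy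
    obtain rfl := Option.some_injective _ hx
    obtain rfl := Option.some_injective _ hy
    simp only [List.getLast_reverse, List.head_map]
    rintro ⟨h1, -⟩
    exact hne h1
  rw [FreeGroup.norm, FreeGroup.toWord_mk, reduce_eq_self_of_chain _ hch]
  simp

theorem dlen_cancel [DecidableEq G] (p a b : List G) :
    dlen (p ++ a) (p ++ b) = dlen a b := by
  rw [dlen, dlen, delta, delta, wordFG_append, wordFG_append, mul_inv_rev]
  congr 1
  group

theorem wpow_length (v : List G) (n : ℕ) : (wpow v n).length = n * v.length := by
  simp [wpow]

end Aux

/-- If `v₁, v₂` are nonempty and there is a mismatch between `u₁` and `u₂`, then for all `n`,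
`|Δ(u₁v₁ⁿ, u₂v₂ⁿ)| = |u₁| + |u₂| + n(|v₁|+|v₂|) - 2p`, where `p < min(|u₁|,|u₂|)` is the length
of the longest common prefix of `u₁` and `u₂`; in particular the delay exceeds `n` for `n ≥ 1`. -/
theorem delay_growth_of_mismatch [DecidableEq G] (u₁ u₂ v₁ v₂ p : List G)
    (hv₁ : v₁ ≠ []) (hv₂ : v₂ ≠ [])
    (hmis : ∃ i, i < u₁.length ∧ i < u₂.length ∧ u₁[i]? ≠ u₂[i]?)
    (hp₁ : p <+: u₁) (hp₂ : p <+: u₂)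
    (hmax : ∀ q : List G, q <+: u₁ → q <+: u₂ → q.length ≤ p.length) :
    p.length < min u₁.length u₂.length ∧
    ∀ n : ℕ,
      dlen (u₁ ++ wpow v₁ n) (u₂ ++ wpow v₂ n)
        = u₁.length + u₂.length + n * (v₁.length + v₂.length) - 2 * p.length ∧
      n * (v₁.length + v₂.length) ≤ dlen (u₁ ++ wpow v₁ n) (u₂ ++ wpow v₂ n) ∧
      (1 ≤ n → n < dlen (u₁ ++ wpow v₁ n) (u₂ ++ wpow v₂ n)) := by
  obtain ⟨i, hi1, hi2, hine⟩ := hmis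
  have htk1 : p = u₁.take p.length := List.prefix_iff_eq_take.mp hp₁
  have htk2 : p = u₂.take p.length := List.prefix_iff_eq_take.mp hp₂
  have hple : p.length ≤ i := by
    by_contra hc
    push_neg at hc
    obtain ⟨s₁, hs₁⟩ := hp₁
    obtain ⟨s₂, hs₂⟩ := hp₂
    apply hine
    rw [← hs₁, ← hs₂, List.getElem?_append, if_pos hc, List.getElem?_append, if_pos hc]
  have hlt1 : p.length < u₁.length := lt_of_le_of_lt hple hi1
  have hlt2 : p.length < u₂.length := lt_of_le_of_lt hple hi2
  have hgne : u₁[p.length] ≠ u₂[p.length] := by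
    intro heq
    have e1 : u₁.take (p.length + 1) = p ++ [u₁[p.length]] := by
      rw [List.take_succ, List.getElem?_eq_getElem hlt1, ← htk1]; rfl
    have e2 : u₂.take (p.length + 1) = p ++ [u₁[p.length]] := by
      rw [List.take_succ, List.getElem?_eq_getElem hlt2, ← htk2, heq]; rfl
    have h1 : p ++ [u₁[p.length]] <+: u₁ := e1 ▸ List.take_prefix _ _
    have h2 : p ++ [u₁[p.length]] <+: u₂ := e2 ▸ List.take_prefix _ _
    have := hmax _ h1 h2
    simp at this
  refine ⟨lt_min hlt1 hlt2, fun n => ?_⟩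
  set s₁ : List G := u₁.drop p.length with hs₁def
  set s₂ : List G := u₂.drop p.length with hs₂def
  have hs₁ : p ++ s₁ = u₁ := by nth_rewrite 1 [htk1]; exact List.take_append_drop _ _
  have hs₂ : p ++ s₂ = u₂ := by nth_rewrite 1 [htk2]; exact List.take_append_drop _ _
  have hs₁ne : s₁ ≠ [] := by rw [hs₁def]; simp; omega
  have hs₂ne : s₂ ≠ [] := by rw [hs₂def]; simp; omega
  have ha : s₁ ++ wpow v₁ n ≠ [] := by simp [hs₁ne]
  have hb : s₂ ++ wpow v₂ n ≠ [] := by simp [hs₂ne]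
  have hd1 : (s₁ ++ wpow v₁ n).head ha = u₁[p.length] := by
    rw [List.head_append_of_ne_nil hs₁ne]
    exact List.head_drop _
  have hd2 : (s₂ ++ wpow v₂ n).head hb = u₂[p.length] := by
    rw [List.head_append_of_ne_nil hs₂ne]
    exact List.head_drop _
  have key : dlen (u₁ ++ wpow v₁ n) (u₂ ++ wpow v₂ n)
      = (s₁ ++ wpow v₁ n).length + (s₂ ++ wpow v₂ n).length := by
    rw [← hs₁, ← hs₂, List.append_assoc, List.append_assoc, dlen_cancel]
    exact dlen_eq_of_head_ne _ _ ha hb (by rw [hd1, hd2]; exact hgne)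
  have hlen1 : u₁.length = p.length + s₁.length := by rw [← hs₁]; simp
  have hlen2 : u₂.length = p.length + s₂.length := by rw [← hs₂]; simp
  rw [key]
  simp only [List.length_append, wpow_length]
  have hv1 : 1 ≤ v₁.length := List.length_pos_iff.mpr hv₁
  have hv2 : 1 ≤ v₂.length := List.length_pos_iff.mpr hv₂
  have hmul : n * 2 ≤ n * (v₁.length + v₂.length) := Nat.mul_le_mul_left n (by omega)
  refine ⟨by rw [Nat.mul_add]; omega, by rw [Nat.mul_add] at hmul ⊢; omega, fun hn => ?_⟩
  rw [Nat.mul_add] at hmul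
  omega
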